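/- (Semi-supervised AUC identity.) Let p_P and p_N be probability measures on X, let π_P, π_N ∈ [0,1] with π_P + π_N = 1, and let p_U = π_P·p_P + π_N·p_N. Assume f : X → ℝ is measurable and the pushforward distributions of f under p_P and under p_N are atomless. Then the sum of the P-U risk R_PU(f) = R(f; p_P, p_U) and the U-N risk R_UN(f) = R(f; p_U, p_N) satisfies R_PU(f) + R_UN(f) − 1/2 = R_PN(f); in particular the bias is always 1/2 regardless of the class prior π_P. -/
import Mathlib


open MeasureTheory

/-- The AUC risk of score function `f` under the 0–1 loss, with positive distribution `μ`
and negative distribution `ν`: `R(f; μ, ν) = ∫∫ 𝟙[f(x) − f(x') < 0] dμ(x) dν(x')`. -/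
noncomputable def AUCRisk {X : Type*} [MeasurableSpace X] (f : X → ℝ)
    (μ ν : Measure X) : ℝ :=
  ∫ x, ∫ x', (if f x - f x' < 0 then (1 : ℝ) else 0) ∂ν ∂μ

section
variable {X : Type*} [MeasurableSpace X] {f : X → ℝ}

lemma meas_k (hf : Measurable f) :
    MeasurableSet {p : X × X | f p.1 - f p.2 < 0} :=
  measurableSet_lt ((hf.comp measurable_fst).sub (hf.comp measurable_snd)) measurable_const

lemma integrable_k (hf : Measurable f) (μ ν : Measure X) [IsFiniteMeasure μ] [IsFiniteMeasure ν] :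
    Integrable (fun p : X × X => if f p.1 - f p.2 < 0 then (1:ℝ) else 0) (μ.prod ν) := by
  have h : (fun p : X × X => if f p.1 - f p.2 < 0 then (1:ℝ) else 0)
      = Set.indicator {p : X × X | f p.1 - f p.2 < 0} (fun _ => 1) := by
    ext p; simp [Set.indicator_apply, Set.mem_setOf_eq]
  rw [h]
  exact (integrable_const 1).indicator (meas_k hf)

lemma auc_prod (hf : Measurable f) (μ ν : Measure X) [IsFiniteMeasure μ] [IsFiniteMeasure ν]
    [SFinite ν] :
    AUCRisk f μ ν = ∫ p, (if f p.1 - f p.2 < 0 then (1:ℝ) else 0) ∂(μ.prod ν) := by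
  unfold AUCRisk
  exact integral_integral (f := fun x x' => if f x - f x' < 0 then (1:ℝ) else 0)
    (integrable_k hf μ ν)

lemma auc_self (hf : Measurable f) (μ : Measure X) [IsProbabilityMeasure μ]
    (hμ : ∀ t : ℝ, μ {x | f x = t} = 0) :
    AUCRisk f μ μ = 1 / 2 := by
  have key : AUCRisk f μ μ + AUCRisk f μ μ = 1 := by
    have hswap : AUCRisk f μ μ
        = ∫ p : X × X, (if f p.2 - f p.1 < 0 then (1:ℝ) else 0) ∂(μ.prod μ) := by
      rw [auc_prod hf μ μ, ← integral_prod_swap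
        (fun p : X × X => if f p.2 - f p.1 < 0 then (1:ℝ) else 0)]
      rfl
    nth_rewrite 2 [hswap]
    rw [auc_prod hf μ μ, ← integral_add (integrable_k hf μ μ)]
    · have h1 : (fun p : X × X => (if f p.1 - f p.2 < 0 then (1:ℝ) else 0)
          + (if f p.2 - f p.1 < 0 then (1:ℝ) else 0))
          = fun p : X × X => 1 - (if f p.1 = f p.2 then (1:ℝ) else 0) := by
        ext p
        rcases lt_trichotomy (f p.1) (f p.2) with h | h | h
        · simp [sub_neg.2 h, h.ne, not_lt.2 h.le, sub_nonneg.2 h.le]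
        · simp [h]
        · simp [sub_neg.2 h, h.ne', not_lt.2 h.le, sub_nonneg.2 h.le]
      rw [h1]
      have hind : ∫ p : X × X, (if f p.1 = f p.2 then (1:ℝ) else 0) ∂(μ.prod μ) = 0 := by
        have hset : MeasurableSet {p : X × X | f p.1 = f p.2} :=
          measurableSet_eq_fun (hf.comp measurable_fst) (hf.comp measurable_snd)
        have h0 : (μ.prod μ) {p : X × X | f p.1 = f p.2} = 0 := by
          rw [Measure.prod_apply hset]
          have : ∀ x, μ (Prod.mk x ⁻¹' {p : X × X | f p.1 = f p.2}) = 0 := by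
            intro x
            have : (Prod.mk x ⁻¹' {p : X × X | f p.1 = f p.2}) = {y | f y = f x} := by
              ext y; simp [eq_comm]
            rw [this]; exact hμ (f x)
          have h2 : ∀ x, μ {a | f x = f a} = 0 := fun x => by
            simpa [eq_comm] using hμ (f x)
          simp [Set.preimage, Set.mem_setOf_eq, h2]
        have heq : (fun p : X × X => (if f p.1 = f p.2 then (1:ℝ) else 0))
            = Set.indicator {p : X × X | f p.1 = f p.2} (fun _ => 1) := by
          ext p; simp [Set.indicator_apply, Set.mem_setOf_eq]
        rw [heq, integral_indicator hset]
        simp [Measure.restrict_eq_zero.mpr h0]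
      rw [integral_sub (integrable_const 1)]
      · simp [hind]
      · have heq : (fun p : X × X => (if f p.1 = f p.2 then (1:ℝ) else 0))
            = Set.indicator {p : X × X | f p.1 = f p.2} (fun _ => 1) := by
          ext p; simp [Set.indicator_apply, Set.mem_setOf_eq]
        rw [heq]
        exact (integrable_const 1).indicator
          (measurableSet_eq_fun (hf.comp measurable_fst) (hf.comp measurable_snd))
    · exact (integrable_k hf μ μ).swap
  linarith

lemma integrable_k_right (hf : Measurable f) (x : X) (ν : Measure X) [IsFiniteMeasure ν] :
    Integrable (fun x' => if f x - f x' < 0 then (1:ℝ) else 0) ν := by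
  have h : (fun x' => if f x - f x' < 0 then (1:ℝ) else 0)
      = Set.indicator {x' | f x - f x' < 0} (fun _ => 1) := by
    ext x'; simp [Set.indicator_apply, Set.mem_setOf_eq]
  rw [h]
  exact (integrable_const 1).indicator
    (measurableSet_lt (measurable_const.sub hf) measurable_const)

lemma auc_right_linear (hf : Measurable f) (a b : ℝ) (ha : 0 ≤ a) (hb : 0 ≤ b)
    (μ ν₁ ν₂ : Measure X) [IsFiniteMeasure μ] [IsFiniteMeasure ν₁] [IsFiniteMeasure ν₂] :
    AUCRisk f μ (ENNReal.ofReal a • ν₁ + ENNReal.ofReal b • ν₂)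
      = a * AUCRisk f μ ν₁ + b * AUCRisk f μ ν₂ := by
  unfold AUCRisk
  have hinner : ∀ x : X,
      ∫ x', (if f x - f x' < 0 then (1:ℝ) else 0) ∂(ENNReal.ofReal a • ν₁ + ENNReal.ofReal b • ν₂)
        = a * (∫ x', (if f x - f x' < 0 then (1:ℝ) else 0) ∂ν₁)
          + b * (∫ x', (if f x - f x' < 0 then (1:ℝ) else 0) ∂ν₂) := by
    intro x
    rw [integral_add_measure ((integrable_k_right hf x ν₁).smul_measure ENNReal.ofReal_ne_top)
      ((integrable_k_right hf x ν₂).smul_measure ENNReal.ofReal_ne_top),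
      integral_smul_measure, integral_smul_measure,
      ENNReal.toReal_ofReal ha, ENNReal.toReal_ofReal hb]
    simp [smul_eq_mul]
  simp_rw [hinner]
  rw [integral_add (((integrable_k hf μ ν₁).integral_prod_left).const_mul a)
    (((integrable_k hf μ ν₂).integral_prod_left).const_mul b),
    integral_const_mul, integral_const_mul]

lemma auc_left_linear (hf : Measurable f) (a b : ℝ) (ha : 0 ≤ a) (hb : 0 ≤ b)
    (μ₁ μ₂ ν : Measure X) [IsFiniteMeasure μ₁] [IsFiniteMeasure μ₂] [IsFiniteMeasure ν] :
    AUCRisk f (ENNReal.ofReal a • μ₁ + ENNReal.ofReal b • μ₂) ν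
      = a * AUCRisk f μ₁ ν + b * AUCRisk f μ₂ ν := by
  unfold AUCRisk
  rw [integral_add_measure
      (((integrable_k hf μ₁ ν).integral_prod_left).smul_measure ENNReal.ofReal_ne_top)
      (((integrable_k hf μ₂ ν).integral_prod_left).smul_measure ENNReal.ofReal_ne_top),
    integral_smul_measure, integral_smul_measure,
    ENNReal.toReal_ofReal ha, ENNReal.toReal_ofReal hb]
  simp [smul_eq_mul]
end

/-- semi-supervised AUC identity:
`R_PU(f) + R_UN(f) − 1/2 = R_PN(f)`, regardless of the class prior. -/
theorem semi_supervised_auc_identity {X : Type*} [MeasurableSpace X]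
    (pP pN : Measure X) [IsProbabilityMeasure pP] [IsProbabilityMeasure pN]
    (πP πN : ℝ) (hπP : πP ∈ Set.Icc (0 : ℝ) 1) (hπN : πN ∈ Set.Icc (0 : ℝ) 1)
    (hsum : πP + πN = 1)
    (f : X → ℝ) (hf : Measurable f)
    (hP : ∀ t : ℝ, pP {x | f x = t} = 0)
    (hN : ∀ t : ℝ, pN {x | f x = t} = 0)
    (pU : Measure X)
    (hpU : pU = ENNReal.ofReal πP • pP + ENNReal.ofReal πN • pN) :
    AUCRisk f pP pU + AUCRisk f pU pN - 1 / 2 = AUCRisk f pP pN := by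
  subst hpU
  rw [auc_right_linear hf πP πN hπP.1 hπN.1 pP pP pN,
    auc_left_linear hf πP πN hπP.1 hπN.1 pP pN pN,
    auc_self hf pP hP, auc_self hf pN hN]
  have h : πN = 1 - πP := by linarith
  rw [h]; ring
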